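/- arXiv:2504.03920 — 7 statements merged into one kernel-verified Lean document; each statement's English description precedes it below -/
import Mathlib

section
/- Let 𝒱 ⊆ ℝⁿ be open, let f : 𝒱 → ℝⁿ be twice differentiable at u ∈ 𝒱, and let λ : 𝒱 → ℝ and r : 𝒱 → ℝⁿ be differentiable at u and satisfy Df(w) r(w) = λ(w) r(w) for all w in a neighborhood of u. Let l ∈ ℝⁿ satisfy (Df(u))ᵀ l = λ(u) l. Then for every v ∈ ℝⁿ, ⟨l, D²f(u)[r(u), v]⟩ = ⟨l, r(u)⟩ · (Dλ(u) v). -/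
open Topology
open scoped RealInnerProductSpace

theorem stmt1 {n : ℕ} (V : Set (EuclideanSpace ℝ (Fin n))) (hV : IsOpen V)
    (f : EuclideanSpace ℝ (Fin n) → EuclideanSpace ℝ (Fin n))
    (u : EuclideanSpace ℝ (Fin n)) (hu : u ∈ V)
    -- `f` is twice differentiable at `u`:
    (hf1 : ∀ᶠ w in 𝓝 u, DifferentiableAt ℝ f w)
    (hf2 : DifferentiableAt ℝ (fderiv ℝ f) u)
    (lam : EuclideanSpace ℝ (Fin n) → ℝ)
    (r : EuclideanSpace ℝ (Fin n) → EuclideanSpace ℝ (Fin n))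
    (hlam : DifferentiableAt ℝ lam u) (hr : DifferentiableAt ℝ r u)
    -- eigenvalue equation `Df(w) r(w) = λ(w) r(w)` near `u`:
    (heig : ∀ᶠ w in 𝓝 u, fderiv ℝ f w (r w) = lam w • r w)
    -- `l` is a left eigenvector: `(Df(u))ᵀ l = λ(u) l`:
    (l : EuclideanSpace ℝ (Fin n))
    (hl : ∀ x, ⟪l, fderiv ℝ f u x⟫ = lam u * ⟪l, x⟫) :
    ∀ v, ⟪l, fderiv ℝ (fderiv ℝ f) u v (r u)⟫ = ⟪l, r u⟫ * fderiv ℝ lam u v := by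
  intro v
  have hEq : fderiv ℝ (fun w => fderiv ℝ f w (r w)) u
      = fderiv ℝ (fun w => lam w • r w) u :=
    Filter.EventuallyEq.fderiv_eq heig
  have h1 : fderiv ℝ (fun w => fderiv ℝ f w (r w)) u v
      = fderiv ℝ f u (fderiv ℝ r u v) + fderiv ℝ (fderiv ℝ f) u v (r u) := by
    rw [fderiv_clm_apply hf2 hr]
    simp
  have h2 : fderiv ℝ (fun w => lam w • r w) u v
      = lam u • fderiv ℝ r u v + fderiv ℝ lam u v • r u := by
    rw [fderiv_fun_smul hlam hr]
    simp
  have key : (fderiv ℝ (fun w => (fderiv ℝ f w) (r w)) u) v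
      = (fderiv ℝ (fun w => lam w • r w) u) v := by rw [hEq]
  rw [h1, h2] at key
  have := congrArg (fun z => ⟪l, z⟫) key
  simp only [inner_add_right, inner_smul_right, hl] at this
  linarith [this]
end

section
/- Let 𝒱 ⊆ ℝⁿ be open, f : 𝒱 → ℝⁿ, η : 𝒱 → ℝ, q : 𝒱 → ℝ all C¹, and assume the entropy–entropy flux compatibility Dq(w) = Dη(w) ∘ Df(w) for all w ∈ 𝒱. Let s > 0, let S : [0, s] → 𝒱 and σ : [0, s] → ℝ be C¹ with S(0) = u, and suppose the Rankine–Hugoniot relation f(S(t)) − f(u) = σ(t)·(S(t) − u) holds for all t ∈ [0, s]. Then for every v ∈ 𝒱: q(S(s);v) − σ(s)·η(S(s)|v) = q(u;v) − σ(s)·η(u|v) + ∫₀ˢ σ′(t)·η(u|S(t)) dt. -/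
open Set

/-- Relative entropy: `η(u|v) = η(u) − η(v) − ⟨∇η(v), u − v⟩`. -/
noncomputable def relEnt {n : ℕ} (η : EuclideanSpace ℝ (Fin n) → ℝ)
    (u v : EuclideanSpace ℝ (Fin n)) : ℝ :=
  η u - η v - fderiv ℝ η v (u - v)

/-- Relative entropy flux: `q(u;v) = q(u) − q(v) − ⟨∇η(v), f(u) − f(v)⟩`. -/
noncomputable def relFlux {n : ℕ} (η q : EuclideanSpace ℝ (Fin n) → ℝ)
    (f : EuclideanSpace ℝ (Fin n) → EuclideanSpace ℝ (Fin n))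
    (u v : EuclideanSpace ℝ (Fin n)) : ℝ :=
  q u - q v - fderiv ℝ η v (f u - f v)

theorem stmt2 {n : ℕ} (V : Set (EuclideanSpace ℝ (Fin n))) (hV : IsOpen V)
    (f : EuclideanSpace ℝ (Fin n) → EuclideanSpace ℝ (Fin n))
    (η q : EuclideanSpace ℝ (Fin n) → ℝ)
    (hf : ContDiffOn ℝ 1 f V) (hη : ContDiffOn ℝ 1 η V) (hq : ContDiffOn ℝ 1 q V)
    -- entropy–entropy flux compatibility `Dq(w) = Dη(w) ∘ Df(w)`:
    (hcompat : ∀ w ∈ V, fderiv ℝ q w = (fderiv ℝ η w).comp (fderiv ℝ f w))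
    (s : ℝ) (hs : 0 < s) (u : EuclideanSpace ℝ (Fin n))
    (S : ℝ → EuclideanSpace ℝ (Fin n)) (σ : ℝ → ℝ)
    (hS : ContDiffOn ℝ 1 S (Icc 0 s)) (hσ : ContDiffOn ℝ 1 σ (Icc 0 s))
    (hSV : ∀ t ∈ Icc (0:ℝ) s, S t ∈ V) (hS0 : S 0 = u)
    -- Rankine–Hugoniot relation along the shock curve:
    (hRH : ∀ t ∈ Icc (0:ℝ) s, f (S t) - f u = σ t • (S t - u)) :
    ∀ v ∈ V,
      relFlux η q f (S s) v - σ s * relEnt η (S s) v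
        = relFlux η q f u v - σ s * relEnt η u v
          + ∫ t in (0:ℝ)..s, derivWithin σ (Icc 0 s) t * relEnt η u (S t) := by
  intro v hv
  have huniq : UniqueDiffOn ℝ (Icc (0:ℝ) s) := uniqueDiffOn_Icc hs
  set σ' : ℝ → ℝ := derivWithin σ (Icc 0 s) with hσ'def
  set S' : ℝ → EuclideanSpace ℝ (Fin n) := derivWithin S (Icc 0 s) with hS'def
  have hSd : ∀ t ∈ Icc (0:ℝ) s, HasDerivWithinAt S (S' t) (Icc 0 s) t := fun t ht =>
    (hS.differentiableOn one_ne_zero t ht).hasDerivWithinAt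
  have hσd : ∀ t ∈ Icc (0:ℝ) s, HasDerivWithinAt σ (σ' t) (Icc 0 s) t := fun t ht =>
    (hσ.differentiableOn one_ne_zero t ht).hasDerivWithinAt
  have hηd : ∀ w ∈ V, DifferentiableAt ℝ η w := fun w hw =>
    (hη.differentiableOn one_ne_zero w hw).differentiableAt (hV.mem_nhds hw)
  have hqd : ∀ w ∈ V, DifferentiableAt ℝ q w := fun w hw =>
    (hq.differentiableOn one_ne_zero w hw).differentiableAt (hV.mem_nhds hw)
  have hfd : ∀ w ∈ V, DifferentiableAt ℝ f w := fun w hw =>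
    (hf.differentiableOn one_ne_zero w hw).differentiableAt (hV.mem_nhds hw)
  set B := fderiv ℝ η v with hB
  set g : ℝ → ℝ := fun τ => relFlux η q f (S τ) v - σ τ * relEnt η (S τ) v
      + σ τ * relEnt η u v with hg
  -- key derivative computation
  have hgderiv : ∀ t ∈ Icc (0:ℝ) s,
      HasDerivWithinAt g (σ' t * relEnt η u (S t)) (Icc 0 s) t := by
    intro t ht
    have hw : S t ∈ V := hSV t ht
    set A := fderiv ℝ η (S t) with hA
    set X : EuclideanSpace ℝ (Fin n) := σ' t • (S t - u) + σ t • S' t with hX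
    -- derivative of f ∘ S via chain rule
    have h1 : HasDerivWithinAt (fun τ => f (S τ)) (fderiv ℝ f (S t) (S' t)) (Icc 0 s) t :=
      (hfd _ hw).hasFDerivAt.comp_hasDerivWithinAt t (hSd t ht)
    -- derivative of f ∘ S via Rankine-Hugoniot
    have h2 : HasDerivWithinAt (fun τ => f (S τ)) X (Icc 0 s) t := by
      have base : HasDerivWithinAt (fun τ => f u + σ τ • (S τ - u))
          (σ t • S' t + σ' t • (S t - u)) (Icc 0 s) t :=
        ((hσd t ht).smul ((hSd t ht).sub_const u)).const_add (f u)
      have base' : HasDerivWithinAt (fun τ => f u + σ τ • (S τ - u)) X (Icc 0 s) t := by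
        rw [hX, add_comm]; exact base
      refine base'.congr (fun τ hτ => ?_) ?_
      · rw [← hRH τ hτ]; abel
      · rw [← hRH t ht]; abel
    have hkey : fderiv ℝ f (S t) (S' t) = X := by
      rw [← h1.derivWithin (huniq t ht), ← h2.derivWithin (huniq t ht)]
    -- derivative of q ∘ S
    have hqS : HasDerivWithinAt (fun τ => q (S τ)) (A X) (Icc 0 s) t := by
      have := (hqd _ hw).hasFDerivAt.comp_hasDerivWithinAt t (hSd t ht)
      rwa [hcompat _ hw, ContinuousLinearMap.comp_apply, hkey] at this
    -- derivative of η ∘ S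
    have hηS : HasDerivWithinAt (fun τ => η (S τ)) (A (S' t)) (Icc 0 s) t :=
      (hηd _ hw).hasFDerivAt.comp_hasDerivWithinAt t (hSd t ht)
    -- derivative of B (f (S ·))
    have hBf : HasDerivWithinAt (fun τ => B (f (S τ))) (B X) (Icc 0 s) t :=
      B.hasFDerivAt.comp_hasDerivWithinAt t h2
    have hBS : HasDerivWithinAt (fun τ => B (S τ)) (B (S' t)) (Icc 0 s) t :=
      B.hasFDerivAt.comp_hasDerivWithinAt t (hSd t ht)
    have hmain : HasDerivWithinAt
        (fun τ => (q (S τ) - q v - (B (f (S τ)) - B (f v)))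
          - σ τ * (η (S τ) - η v - (B (S τ) - B v)) + σ τ * relEnt η u v)
        ((A X - B X)
          - (σ' t * (η (S t) - η v - (B (S t) - B v))
              + σ t * (A (S' t) - B (S' t)))
          + (σ' t * relEnt η u v + σ t * 0)) (Icc 0 s) t := by
      exact (((hqS.sub_const (q v)).sub (hBf.sub_const (B (f v)))).sub
        ((hσd t ht).mul (((hηS.sub_const (η v))).sub (hBS.sub_const (B v))))).add
        ((hσd t ht).mul (hasDerivWithinAt_const t _ _))
    have heq : g = fun τ => (q (S τ) - q v - (B (f (S τ)) - B (f v)))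
          - σ τ * (η (S τ) - η v - (B (S τ) - B v)) + σ τ * relEnt η u v := by
      funext τ
      simp [hg, relFlux, relEnt, ← hB, map_sub]
    rw [heq]
    convert hmain using 1
    simp only [hX, relEnt, map_add, map_smul, map_sub, ← hA, ← hB, smul_eq_mul]
    ring
  -- continuity of g on Icc
  have hScont : ContinuousOn S (Icc 0 s) := hS.continuousOn
  have hmaps : MapsTo S (Icc 0 s) V := fun t ht => hSV t ht
  have hgcont : ContinuousOn g (Icc 0 s) := by
    apply ContinuousOn.add
    apply ContinuousOn.sub
    · exact ((hq.continuousOn.comp hScont hmaps).sub continuousOn_const).sub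
        (B.continuous.comp_continuousOn
          ((hf.continuousOn.comp hScont hmaps).sub continuousOn_const))
    · exact hσ.continuousOn.mul
        (((hη.continuousOn.comp hScont hmaps).sub continuousOn_const).sub
          (B.continuous.comp_continuousOn (hScont.sub continuousOn_const)))
    · exact hσ.continuousOn.mul continuousOn_const
  -- integrability of the integrand
  have hint : IntervalIntegrable (fun t => σ' t * relEnt η u (S t)) MeasureTheory.volume 0 s := by
    apply ContinuousOn.intervalIntegrable
    rw [uIcc_of_le hs.le]
    apply ContinuousOn.mul
    · exact hσ.continuousOn_derivWithin huniq le_rfl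
    · have hfdη : ContinuousOn (fderiv ℝ η) V := hη.continuousOn_fderiv_of_isOpen hV le_rfl
      have : ContinuousOn (fun t => fderiv ℝ η (S t) (u - S t)) (Icc 0 s) :=
        (hfdη.comp hScont hmaps).clm_apply (continuousOn_const.sub hScont)
      exact (continuousOn_const.sub (hη.continuousOn.comp hScont hmaps)).sub this
  have hFTC : ∫ t in (0:ℝ)..s, σ' t * relEnt η u (S t) = g s - g 0 := by
    apply intervalIntegral.integral_eq_sub_of_hasDeriv_right_of_le hs.le hgcont _ hint
    intro x hx
    exact ((hgderiv x (Ioo_subset_Icc_self hx)).hasDerivAt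
      (Icc_mem_nhds hx.1 hx.2)).hasDerivWithinAt
  have hg0 : g 0 = relFlux η q f u v := by
    simp [hg, hS0]
  have hgs : g s = relFlux η q f (S s) v - σ s * relEnt η (S s) v + σ s * relEnt η u v := rfl
  rw [hFTC, hg0, hgs]
  ring
end

section
/- Let 𝒱 ⊆ ℝⁿ be open, f : 𝒱 → ℝⁿ, η : 𝒱 → ℝ, q : 𝒱 → ℝ all C¹ with Dq(w) = Dη(w) ∘ Df(w) for all w ∈ 𝒱. Fix u_L, u_R ∈ 𝒱 and a > 0, and define η̃(w) := a·η(w|u_L) − η(w|u_R), q̃(w) := a·q(w;u_L) − q(w;u_R), D_cont(u) := −q̃(u) + λ·η̃(u), and D_RH(u₋, u₊, σ) := (q(u₊;u_R) − σ·η(u₊|u_R)) − a·(q(u₋;u_L) − σ·η(u₋|u_L)). Let s > 0, let S : [0, s] → 𝒱 and σ : [0, s] → ℝ be C¹ with S(0) = u, σ(0) = λ, and f(S(t)) − f(u) = σ(t)·(S(t) − u) for all t ∈ [0, s]. Then D_RH(u, S(s), σ(s)) = D_cont(u) + ∫₀ˢ σ′(t)·(η̃(u) + η(u|S(t))) dt.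 -/
open Set

theorem stmt3 {n : ℕ} (V : Set (EuclideanSpace ℝ (Fin n))) (hV : IsOpen V)
    (f : EuclideanSpace ℝ (Fin n) → EuclideanSpace ℝ (Fin n))
    (η q : EuclideanSpace ℝ (Fin n) → ℝ)
    (hf : ContDiffOn ℝ 1 f V) (hη : ContDiffOn ℝ 1 η V) (hq : ContDiffOn ℝ 1 q V)
    (hcompat : ∀ w ∈ V, fderiv ℝ q w = (fderiv ℝ η w).comp (fderiv ℝ f w))
    (u_L u_R : EuclideanSpace ℝ (Fin n)) (huL : u_L ∈ V) (huR : u_R ∈ V)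
    (a : ℝ) (ha : 0 < a)
    (s : ℝ) (hs : 0 < s) (u : EuclideanSpace ℝ (Fin n)) (lam : ℝ)
    (S : ℝ → EuclideanSpace ℝ (Fin n)) (σ : ℝ → ℝ)
    (hS : ContDiffOn ℝ 1 S (Icc 0 s)) (hσ : ContDiffOn ℝ 1 σ (Icc 0 s))
    (hSV : ∀ t ∈ Icc (0:ℝ) s, S t ∈ V) (hS0 : S 0 = u) (hσ0 : σ 0 = lam)
    (hRH : ∀ t ∈ Icc (0:ℝ) s, f (S t) - f u = σ t • (S t - u)) :
    -- `D_RH(u, S(s), σ(s)) = D_cont(u) + ∫₀ˢ σ′(t)·(η̃(u) + η(u|S(t))) dt` where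
    -- `η̃(w) = a·η(w|u_L) − η(w|u_R)`, `q̃(w) = a·q(w;u_L) − q(w;u_R)`,
    -- `D_cont(u) = −q̃(u) + λ·η̃(u)` and
    -- `D_RH(u₋,u₊,σ) = (q(u₊;u_R) − σ·η(u₊|u_R)) − a·(q(u₋;u_L) − σ·η(u₋|u_L))`.
    (relFlux η q f (S s) u_R - σ s * relEnt η (S s) u_R)
        - a * (relFlux η q f u u_L - σ s * relEnt η u u_L)
      = (-(a * relFlux η q f u u_L - relFlux η q f u u_R)
            + lam * (a * relEnt η u u_L - relEnt η u u_R))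
        + ∫ t in (0:ℝ)..s, derivWithin σ (Icc 0 s) t
            * ((a * relEnt η u u_L - relEnt η u u_R) + relEnt η u (S t)) := by
  have h0s : (0:ℝ) ≤ s := hs.le
  have hU : UniqueDiffOn ℝ (Icc (0:ℝ) s) := uniqueDiffOn_Icc hs
  have hqdiff : ∀ w ∈ V, DifferentiableAt ℝ q w := fun w hw =>
    (hq.differentiableOn one_ne_zero w hw).differentiableAt (hV.mem_nhds hw)
  have hηdiff : ∀ w ∈ V, DifferentiableAt ℝ η w := fun w hw =>
    (hη.differentiableOn one_ne_zero w hw).differentiableAt (hV.mem_nhds hw)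
  have hfdiff : ∀ w ∈ V, DifferentiableAt ℝ f w := fun w hw =>
    (hf.differentiableOn one_ne_zero w hw).differentiableAt (hV.mem_nhds hw)
  set L := fderiv ℝ η u_R with hLdef
  set σ' := fun t => derivWithin σ (Icc (0:ℝ) s) t with hσ'def
  set S' := fun t => derivWithin S (Icc (0:ℝ) s) t with hS'def
  set G := fun τ => (relFlux η q f (S τ) u_R - σ τ * relEnt η (S τ) u_R)
      - a * (relFlux η q f u u_L - σ τ * relEnt η u u_L) with hGdef
  set h' := fun t => σ' t * ((a * relEnt η u u_L - relEnt η u u_R) + relEnt η u (S t))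
    with hh'def
  have hmaps : MapsTo S (Icc 0 s) V := fun t ht => hSV t ht
  have hScont := hS.continuousOn
  have hσcont := hσ.continuousOn
  -- continuity of G
  have hqScont : ContinuousOn (fun t => q (S t)) (Icc 0 s) := hq.continuousOn.comp hScont hmaps
  have hηScont : ContinuousOn (fun t => η (S t)) (Icc 0 s) := hη.continuousOn.comp hScont hmaps
  have hfScont : ContinuousOn (fun t => f (S t)) (Icc 0 s) := hf.continuousOn.comp hScont hmaps
  have hGcont : ContinuousOn G (Icc 0 s) := by
    simp only [hGdef, relFlux, relEnt]
    apply ContinuousOn.sub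
    · apply ContinuousOn.sub
      · exact (hqScont.sub continuousOn_const).sub
          (L.continuous.comp_continuousOn (hfScont.sub continuousOn_const))
      · exact hσcont.mul ((hηScont.sub continuousOn_const).sub
          (L.continuous.comp_continuousOn (hScont.sub continuousOn_const)))
    · exact continuousOn_const.mul (continuousOn_const.sub (hσcont.mul continuousOn_const))
  -- continuity of h'
  have hσ'cont : ContinuousOn σ' (Icc 0 s) := hσ.continuousOn_derivWithin hU le_rfl
  have hAcont : ContinuousOn (fun t => fderiv ℝ η (S t)) (Icc 0 s) :=
    (hη.continuousOn_fderiv_of_isOpen hV le_rfl).comp hScont hmaps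
  have hh'cont : ContinuousOn h' (Icc 0 s) := by
    simp only [hh'def, relEnt]
    exact hσ'cont.mul (continuousOn_const.add ((continuousOn_const.sub hηScont).sub
      (hAcont.clm_apply (continuousOn_const.sub hScont))))
  -- the derivative
  have hderiv : ∀ t ∈ Ioo (0:ℝ) s, HasDerivAt G (h' t) t := by
    intro t ht
    have htI : t ∈ Icc (0:ℝ) s := Ioo_subset_Icc_self ht
    have hnb : Icc (0:ℝ) s ∈ nhds t := Icc_mem_nhds ht.1 ht.2
    have hSt : S t ∈ V := hSV t htI
    have hSd : HasDerivAt S (S' t) t :=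
      ((hS.differentiableOn one_ne_zero t htI).hasDerivWithinAt).hasDerivAt hnb
    have hσd : HasDerivAt σ (σ' t) t :=
      ((hσ.differentiableOn one_ne_zero t htI).hasDerivWithinAt).hasDerivAt hnb
    have hfS1 : HasDerivAt (fun τ => f (S τ)) (fderiv ℝ f (S t) (S' t)) t :=
      (hfdiff _ hSt).hasFDerivAt.comp_hasDerivAt t hSd
    have hfS2 : HasDerivAt (fun τ => f u + σ τ • (S τ - u))
        (σ t • S' t + σ' t • (S t - u)) t :=
      (hσd.smul (hSd.sub_const u)).const_add (f u)
    have heq : (fun τ => f (S τ)) =ᶠ[nhds t] fun τ => f u + σ τ • (S τ - u) := by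
      filter_upwards [hnb] with τ hτ
      rw [← hRH τ hτ]
      abel
    have hfS2' : HasDerivAt (fun τ => f (S τ)) (σ t • S' t + σ' t • (S t - u)) t :=
      hfS2.congr_of_eventuallyEq heq
    have hF : fderiv ℝ f (S t) (S' t) = σ t • S' t + σ' t • (S t - u) :=
      hfS1.unique hfS2'
    have hqS : HasDerivAt (fun τ => q (S τ)) (fderiv ℝ η (S t) (fderiv ℝ f (S t) (S' t))) t := by
      have h := (hqdiff _ hSt).hasFDerivAt.comp_hasDerivAt t hSd
      rw [hcompat _ hSt] at h
      exact h
    have hηS : HasDerivAt (fun τ => η (S τ)) (fderiv ℝ η (S t) (S' t)) t :=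
      (hηdiff _ hSt).hasFDerivAt.comp_hasDerivAt t hSd
    have hLf : HasDerivAt (fun τ => L (f (S τ) - f u_R)) (L (fderiv ℝ f (S t) (S' t))) t :=
      L.hasFDerivAt.comp_hasDerivAt t (hfS1.sub_const (f u_R))
    have hLS : HasDerivAt (fun τ => L (S τ - u_R)) (L (S' t)) t :=
      L.hasFDerivAt.comp_hasDerivAt t (hSd.sub_const u_R)
    have h1 : HasDerivAt (fun τ => (q (S τ) - q u_R - L (f (S τ) - f u_R))
        - σ τ * (η (S τ) - η u_R - L (S τ - u_R)))
        ((fderiv ℝ η (S t) (fderiv ℝ f (S t) (S' t)) - L (fderiv ℝ f (S t) (S' t)))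
          - (σ' t * (η (S t) - η u_R - L (S t - u_R))
             + σ t * (fderiv ℝ η (S t) (S' t) - L (S' t)))) t :=
      ((hqS.sub_const (q u_R)).sub hLf).sub
        (hσd.mul ((hηS.sub_const (η u_R)).sub hLS))
    have h2 : HasDerivAt (fun τ => a * (relFlux η q f u u_L - σ τ * relEnt η u u_L))
        (a * (-(σ' t * relEnt η u u_L))) t :=
      ((hσd.mul_const (relEnt η u u_L)).const_sub (relFlux η q f u u_L)).const_mul a
    have hG : HasDerivAt G
        (((fderiv ℝ η (S t) (fderiv ℝ f (S t) (S' t)) - L (fderiv ℝ f (S t) (S' t)))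
          - (σ' t * (η (S t) - η u_R - L (S t - u_R))
             + σ t * (fderiv ℝ η (S t) (S' t) - L (S' t))))
          - a * (-(σ' t * relEnt η u u_L))) t := by
      have := h1.sub h2
      exact this
    have hDE : h' t = ((fderiv ℝ η (S t) (fderiv ℝ f (S t) (S' t))
          - L (fderiv ℝ f (S t) (S' t)))
          - (σ' t * (η (S t) - η u_R - L (S t - u_R))
             + σ t * (fderiv ℝ η (S t) (S' t) - L (S' t))))
          - a * (-(σ' t * relEnt η u u_L)) := by
      rw [hF]
      simp only [hh'def, relEnt, map_add, map_sub, map_smul, smul_eq_mul]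
      ring
    rw [hDE]
    exact hG
  have hint : IntervalIntegrable h' MeasureTheory.volume 0 s := by
    apply ContinuousOn.intervalIntegrable
    rwa [uIcc_of_le h0s]
  have key : ∫ t in (0:ℝ)..s, h' t = G s - G 0 :=
    intervalIntegral.integral_eq_sub_of_hasDerivAt_of_le h0s hGcont hderiv hint
  have hGs : G s = G 0 + ∫ t in (0:ℝ)..s, h' t := by rw [key]; ring
  have hG0 : G 0 = -(a * relFlux η q f u u_L - relFlux η q f u u_R)
      + lam * (a * relEnt η u u_L - relEnt η u u_R) := by
    simp only [hGdef, hS0, hσ0]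
    ring
  calc (relFlux η q f (S s) u_R - σ s * relEnt η (S s) u_R)
        - a * (relFlux η q f u u_L - σ s * relEnt η u u_L) = G s := rfl
    _ = G 0 + ∫ t in (0:ℝ)..s, h' t := hGs
    _ = _ := by rw [hG0]
end

section
/- Let 𝒱 ⊆ ℝⁿ be open, let η : 𝒱 → ℝ be C², let u ∈ 𝒱, r ∈ ℝⁿ, and let S : [0, s̄] → 𝒱 be C¹ with S(0) = u and S′(0) = r. If ∇²η(u)(r, r) > 0, then there exists s₀ ∈ (0, s̄] such that the function g(t) := η(u|S(t)) satisfies g′(t) > 0 for all t ∈ (0, s₀); in particular g is strictly increasing on [0, s₀]. Moreover g′(t) = ⟨∇²η(S(t)) S′(t), S(t) − u⟩ for all t. -/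
open Set Filter Topology

theorem stmt7 {n : ℕ} (V : Set (EuclideanSpace ℝ (Fin n))) (hV : IsOpen V)
    (η : EuclideanSpace ℝ (Fin n) → ℝ) (hη : ContDiffOn ℝ 2 η V)
    (u r : EuclideanSpace ℝ (Fin n)) (sbar : ℝ) (hsbar : 0 < sbar)
    (S : ℝ → EuclideanSpace ℝ (Fin n))
    (hS : ContDiffOn ℝ 1 S (Icc 0 sbar)) (hSV : ∀ t ∈ Icc (0:ℝ) sbar, S t ∈ V)
    (hS0 : S 0 = u) (hS0' : derivWithin S (Icc 0 sbar) 0 = r)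
    -- `∇²η(u)(r, r) > 0`:
    (hpos : 0 < fderiv ℝ (fderiv ℝ η) u r r) :
    ∃ s₀, 0 < s₀ ∧ s₀ ≤ sbar ∧
      (∀ t ∈ Ioo (0:ℝ) s₀,
        0 < derivWithin (fun τ => relEnt η u (S τ)) (Icc 0 sbar) t) ∧
      StrictMonoOn (fun τ => relEnt η u (S τ)) (Icc 0 s₀) ∧
      -- `g′(t) = ⟨∇²η(S(t)) S′(t), S(t) − u⟩` for all `t`:
      (∀ t ∈ Icc (0:ℝ) sbar,
        derivWithin (fun τ => relEnt η u (S τ)) (Icc 0 sbar) t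
          = fderiv ℝ (fderiv ℝ η) (S t) (derivWithin S (Icc 0 sbar) t) (S t - u)) := by
  have h0mem : (0:ℝ) ∈ Icc (0:ℝ) sbar := ⟨le_rfl, hsbar.le⟩
  have huV : u ∈ V := by rw [← hS0]; exact hSV 0 h0mem
  have hud : UniqueDiffOn ℝ (Icc (0:ℝ) sbar) := uniqueDiffOn_Icc hsbar
  set I := Icc (0:ℝ) sbar with hI
  set D := fderiv ℝ (fderiv ℝ η) with hD
  set S' := derivWithin S I with hS'def
  have hη1 : ContDiffOn ℝ 1 (fderiv ℝ η) V := hη.fderiv_of_isOpen hV (by norm_num)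
  have hηdiff : ∀ x ∈ V, HasFDerivAt η (fderiv ℝ η x) x := fun x hx =>
    ((hη.differentiableOn (by norm_num) x hx).differentiableAt (hV.mem_nhds hx)).hasFDerivAt
  have hη1diff : ∀ x ∈ V, HasFDerivAt (fderiv ℝ η) (D x) x := fun x hx =>
    ((hη1.differentiableOn one_ne_zero x hx).differentiableAt (hV.mem_nhds hx)).hasFDerivAt
  have hDcont : ContinuousOn D V := hη1.continuousOn_fderiv_of_isOpen hV le_rfl
  have hSdiff : ∀ t ∈ I, HasDerivWithinAt S (S' t) I t := fun t ht =>
    ((hS.differentiableOn one_ne_zero) t ht).hasDerivWithinAt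
  -- derivative formula
  have key : ∀ t ∈ I, HasDerivWithinAt (fun τ => relEnt η u (S τ))
      (D (S t) (S' t) (S t - u)) I t := by
    intro t ht
    have hStV := hSV t ht
    have h1 : HasDerivWithinAt (fun τ => η (S τ)) (fderiv ℝ η (S t) (S' t)) I t :=
      (hηdiff (S t) hStV).comp_hasDerivWithinAt t (hSdiff t ht)
    have h2 : HasDerivWithinAt (fun τ => fderiv ℝ η (S τ)) (D (S t) (S' t)) I t :=
      (hη1diff (S t) hStV).comp_hasDerivWithinAt t (hSdiff t ht)
    have h3 : HasDerivWithinAt (fun τ => u - S τ) (0 - S' t) I t :=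
      (hasDerivWithinAt_const t I u).sub (hSdiff t ht)
    have h4 := h2.clm_apply h3
    have h5 := ((hasDerivWithinAt_const t I (η u)).sub h1).sub h4
    convert h5 using 1
    case e'_4 => rfl
    case e'_5 => rfl
    case e'_8 => funext τ; rfl
    simp only [zero_sub, map_neg, map_sub]
    ring
  have keyval : ∀ t ∈ I, derivWithin (fun τ => relEnt η u (S τ)) I t
      = D (S t) (S' t) (S t - u) := fun t ht => (key t ht).derivWithin (hud t ht)
  -- limit argument
  set l := 𝓝[I \ {0}] (0:ℝ) with hl
  have tS : Tendsto S l (𝓝 u) := by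
    have := (hS.continuousOn 0 h0mem)
    rw [ContinuousWithinAt, hS0] at this
    exact this.mono_left (nhdsWithin_mono _ diff_subset)
  have tD : Tendsto (fun t => D (S t)) l (𝓝 (D u)) :=
    ((hDcont.continuousAt (hV.mem_nhds huV)).tendsto).comp tS
  have tS' : Tendsto S' l (𝓝 r) := by
    have hc : ContinuousOn S' I := hS.continuousOn_derivWithin hud le_rfl
    have := hc 0 h0mem
    rw [ContinuousWithinAt, hS0'] at this
    exact this.mono_left (nhdsWithin_mono _ diff_subset)
  have tQ : Tendsto (fun t => t⁻¹ • (S t - u)) l (𝓝 r) := by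
    have h0 : HasDerivWithinAt S r I 0 := hS0' ▸ hSdiff 0 h0mem
    have := hasDerivWithinAt_iff_tendsto_slope.mp h0
    refine this.congr fun t => ?_
    rw [slope_def_module, hS0, sub_zero]
  set ψ : ℝ → ℝ := fun t => D (S t) (S' t) (t⁻¹ • (S t - u)) with hψ
  have tψ : Tendsto ψ l (𝓝 (D u r r)) := by
    have capp : Continuous fun p : ((EuclideanSpace ℝ (Fin n) →L[ℝ]
        (EuclideanSpace ℝ (Fin n) →L[ℝ] ℝ)) × EuclideanSpace ℝ (Fin n)) => p.1 p.2 :=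
      isBoundedBilinearMap_apply.continuous
    have capp2 : Continuous fun p : ((EuclideanSpace ℝ (Fin n) →L[ℝ] ℝ)
        × EuclideanSpace ℝ (Fin n)) => p.1 p.2 := isBoundedBilinearMap_apply.continuous
    have t1 : Tendsto (fun t => D (S t) (S' t)) l (𝓝 (D u r)) :=
      (capp.tendsto (D u, r)).comp (tD.prodMk_nhds tS')
    exact (capp2.tendsto (D u r, r)).comp (t1.prodMk_nhds tQ)
  have hev : ∀ᶠ t in l, 0 < ψ t := tψ.eventually (eventually_gt_nhds hpos)
  rw [hl, eventually_nhdsWithin_iff, Metric.eventually_nhds_iff] at hev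
  obtain ⟨ε, hε, hevε⟩ := hev
  set s₀ := min sbar (ε/2) with hs₀
  have hs₀sbar : s₀ ≤ sbar := min_le_left _ _
  have hposIoo : ∀ t ∈ Ioo (0:ℝ) s₀,
      0 < derivWithin (fun τ => relEnt η u (S τ)) I t := by
    intro t ht
    have htsbar : t ∈ I := ⟨ht.1.le, (ht.2.trans_le (min_le_left _ _)).le⟩
    have htI : t ∈ I \ {0} := ⟨htsbar, by simp [ne_of_gt ht.1]⟩
    have hdist : dist t 0 < ε := by
      rw [Real.dist_eq, sub_zero, abs_of_pos ht.1]
      exact lt_of_lt_of_le (ht.2.trans_le (min_le_right _ _)) (by linarith)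
    have hψt : 0 < ψ t := hevε hdist htI
    rw [keyval t htsbar]
    have : D (S t) (S' t) (S t - u) = t * ψ t := by
      rw [hψ]; simp only [map_smul, smul_eq_mul, mul_inv_cancel_left₀ (ne_of_gt ht.1)]
    rw [this]
    exact mul_pos ht.1 hψt
  refine ⟨s₀, lt_min hsbar (by positivity), hs₀sbar, hposIoo, ?_, keyval⟩
  have gcont : ContinuousOn (fun τ => relEnt η u (S τ)) (Icc 0 s₀) :=
    ContinuousOn.mono (fun t ht => (key t ht).continuousWithinAt)
      (Icc_subset_Icc le_rfl hs₀sbar)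
  refine strictMonoOn_of_deriv_pos (convex_Icc 0 s₀) gcont ?_
  intro x hx
  rw [interior_Icc] at hx
  have hxI : x ∈ I := ⟨hx.1.le, (hx.2.trans_le hs₀sbar).le⟩
  have hnhds : I ∈ 𝓝 x := Icc_mem_nhds hx.1 (hx.2.trans_le hs₀sbar)
  have hd := ((key x hxI).hasDerivAt hnhds).deriv
  rw [hd, ← keyval x hxI]
  exact hposIoo x hx
end

section
/- Let 𝒱 ⊆ ℝⁿ be open, let η : 𝒱 → ℝ be C², fix u_L, u_R ∈ 𝒱 and a ∈ ℝ, let Ω ⊆ 𝒱 be open, and let u⁺ : Ω → 𝒱 be differentiable at u ∈ Ω and satisfy η(w|u⁺(w)) = −(a·η(w|u_L) − η(w|u_R)) for all w ∈ Ω. Then for every direction v ∈ ℝⁿ: ⟨∇η(u_R) − ∇η(u⁺(u)), v⟩ + a·⟨∇η(u) − ∇η(u_L), v⟩ = ⟨∇²η(u⁺(u))(Du⁺(u) v), u − u⁺(u)⟩. -/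
theorem stmt10 {n : ℕ} (V Ω : Set (EuclideanSpace ℝ (Fin n)))
    (hV : IsOpen V) (hΩ : IsOpen Ω) (hΩV : Ω ⊆ V)
    (η : EuclideanSpace ℝ (Fin n) → ℝ) (hη : ContDiffOn ℝ 2 η V)
    (u_L u_R : EuclideanSpace ℝ (Fin n)) (huL : u_L ∈ V) (huR : u_R ∈ V)
    (a : ℝ)
    (uplus : EuclideanSpace ℝ (Fin n) → EuclideanSpace ℝ (Fin n))
    (hmaps : ∀ w ∈ Ω, uplus w ∈ V)
    (u : EuclideanSpace ℝ (Fin n)) (hu : u ∈ Ω)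
    (hup : DifferentiableAt ℝ uplus u)
    -- implicit equation `η(w|u⁺(w)) = −(a·η(w|u_L) − η(w|u_R))` on `Ω`:
    (heq : ∀ w ∈ Ω, relEnt η w (uplus w) = -(a * relEnt η w u_L - relEnt η w u_R)) :
    -- `⟨∇η(u_R) − ∇η(u⁺(u)), v⟩ + a·⟨∇η(u) − ∇η(u_L), v⟩
    --    = ⟨∇²η(u⁺(u))(Du⁺(u)v), u − u⁺(u)⟩`
    ∀ v, (fderiv ℝ η u_R v - fderiv ℝ η (uplus u) v)
          + a * (fderiv ℝ η u v - fderiv ℝ η u_L v)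
        = fderiv ℝ (fderiv ℝ η) (uplus u) (fderiv ℝ uplus u v) (u - uplus u) := by
  intro v
  set g := fderiv ℝ η with hg
  -- differentiability of η at points of V
  have hηx : ∀ x ∈ V, HasFDerivAt η (g x) x := fun x hx =>
    ((hη.contDiffAt (hV.mem_nhds hx)).differentiableAt (by norm_num)).hasFDerivAt
  have huV : u ∈ V := hΩV hu
  have hupV : uplus u ∈ V := hmaps u hu
  -- second derivative at uplus u
  have hgd : HasFDerivAt g (fderiv ℝ g (uplus u)) (uplus u) := by
    have h2 : ContDiffAt ℝ 2 η (uplus u) := hη.contDiffAt (hV.mem_nhds hupV)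
    have h1 : ContDiffAt ℝ 1 g (uplus u) := h2.fderiv_right (by norm_num)
    exact (h1.differentiableAt (by norm_num)).hasFDerivAt
  set Du := fderiv ℝ uplus u with hDu
  have hDu' : HasFDerivAt uplus Du u := hup.hasFDerivAt
  -- derivative of w ↦ relEnt η w (uplus w)
  have h1 : HasFDerivAt η (g u) u := hηx u huV
  have h2 : HasFDerivAt (fun w => η (uplus w)) ((g (uplus u)).comp Du) u :=
    (hηx _ hupV).comp u hDu'
  have h3 : HasFDerivAt (fun w => g (uplus w)) ((fderiv ℝ g (uplus u)).comp Du) u :=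
    hgd.comp u hDu'
  have h4 : HasFDerivAt (fun w => w - uplus w)
      (ContinuousLinearMap.id ℝ _ - Du) u := (hasFDerivAt_id u).sub hDu'
  have h5 : HasFDerivAt (fun w => g (uplus w) (w - uplus w))
      ((g (uplus u)).comp (ContinuousLinearMap.id ℝ _ - Du)
        + ((fderiv ℝ g (uplus u)).comp Du).flip (u - uplus u)) u :=
    h3.clm_apply h4
  have hP : HasFDerivAt (fun w => relEnt η w (uplus w))
      (g u - (g (uplus u)).comp Du
        - ((g (uplus u)).comp (ContinuousLinearMap.id ℝ _ - Du)
            + ((fderiv ℝ g (uplus u)).comp Du).flip (u - uplus u))) u :=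
    (h1.sub h2).sub h5
  -- derivative of w ↦ relEnt η w u_L and u_R
  have hcL : HasFDerivAt (fun w => g u_L (w - u_L)) (g u_L) u := by
    have := (g u_L).hasFDerivAt.comp u ((hasFDerivAt_id u).sub_const u_L)
    rw [ContinuousLinearMap.comp_id] at this
    exact this
  have hcR : HasFDerivAt (fun w => g u_R (w - u_R)) (g u_R) u := by
    have := (g u_R).hasFDerivAt.comp u ((hasFDerivAt_id u).sub_const u_R)
    rw [ContinuousLinearMap.comp_id] at this
    exact this
  have hL : HasFDerivAt (fun w => relEnt η w u_L) (g u - 0 - g u_L) u :=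
    (h1.sub (hasFDerivAt_const _ _)).sub hcL
  have hR : HasFDerivAt (fun w => relEnt η w u_R) (g u - 0 - g u_R) u :=
    (h1.sub (hasFDerivAt_const _ _)).sub hcR
  -- the combined function is 0 on Ω
  have hG : HasFDerivAt
      (fun w => relEnt η w (uplus w) + (a * relEnt η w u_L - relEnt η w u_R))
      ((g u - (g (uplus u)).comp Du
        - ((g (uplus u)).comp (ContinuousLinearMap.id ℝ _ - Du)
            + ((fderiv ℝ g (uplus u)).comp Du).flip (u - uplus u)))
        + (a • (g u - 0 - g u_L) - (g u - 0 - g u_R))) u :=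
    hP.add ((hL.const_mul a).sub hR)
  have hzero : HasFDerivAt (fun _ : EuclideanSpace ℝ (Fin n) => (0 : ℝ))
      ((g u - (g (uplus u)).comp Du
        - ((g (uplus u)).comp (ContinuousLinearMap.id ℝ _ - Du)
            + ((fderiv ℝ g (uplus u)).comp Du).flip (u - uplus u)))
        + (a • (g u - 0 - g u_L) - (g u - 0 - g u_R))) u := by
    apply hG.congr_of_eventuallyEq
    filter_upwards [hΩ.mem_nhds hu] with w hw
    have := heq w hw
    linarith
  have hL0 := hzero.unique (hasFDerivAt_const (0 : ℝ) u)
  have hv := congrFun (congrArg (fun (f : _ →L[ℝ] ℝ) => (f : _ → ℝ)) hL0) v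
  simp only [ContinuousLinearMap.add_apply, ContinuousLinearMap.sub_apply,
    ContinuousLinearMap.comp_apply, ContinuousLinearMap.flip_apply,
    ContinuousLinearMap.smul_apply, ContinuousLinearMap.coe_id', id_eq,
    ContinuousLinearMap.zero_apply, smul_eq_mul, map_sub] at hv
  simp only [map_sub]
  linarith
end

section
/- Let 𝒱 ⊆ ℝⁿ be open, f : 𝒱 → ℝⁿ, η : 𝒱 → ℝ, q : 𝒱 → ℝ all C¹ with Dq(w) = Dη(w) ∘ Df(w) for all w ∈ 𝒱, and let η be C². Fix u_L, u_R ∈ 𝒱 and a ∈ ℝ. Let Ω ⊆ 𝒱 be open and let u⁺ : Ω → 𝒱, σ : Ω → ℝ be differentiable at u ∈ Ω and satisfy, for all w ∈ Ω: f(u⁺(w)) − f(w) = σ(w)·(u⁺(w) − w) and η(w|u⁺(w)) = −(a·η(w|u_L) − η(w|u_R)). Define D_max(w) := (q(u⁺(w);u_R) − σ(w)·η(u⁺(w)|u_R)) − a·(q(w;u_L) − σ(w)·η(w|u_L)). Then for every direction v ∈ ℝⁿ: D D_max(u) v = ⟨∇η(u⁺(u)) − ∇η(u_R) − a·(∇η(u)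 − ∇η(u_L)), (Df(u) − σ(u)·I) v⟩. -/
/-- `D_max(w) = (q(u⁺(w);u_R) − σ(w)·η(u⁺(w)|u_R)) − a·(q(w;u_L) − σ(w)·η(w|u_L))`. -/
noncomputable def Dmax {n : ℕ} (η q : EuclideanSpace ℝ (Fin n) → ℝ)
    (f uplus : EuclideanSpace ℝ (Fin n) → EuclideanSpace ℝ (Fin n))
    (σ : EuclideanSpace ℝ (Fin n) → ℝ)
    (u_L u_R : EuclideanSpace ℝ (Fin n)) (a : ℝ)
    (w : EuclideanSpace ℝ (Fin n)) : ℝ :=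
  (relFlux η q f (uplus w) u_R - σ w * relEnt η (uplus w) u_R)
    - a * (relFlux η q f w u_L - σ w * relEnt η w u_L)

theorem stmt11 {n : ℕ} (V Ω : Set (EuclideanSpace ℝ (Fin n)))
    (hV : IsOpen V) (hΩ : IsOpen Ω) (hΩV : Ω ⊆ V)
    (f : EuclideanSpace ℝ (Fin n) → EuclideanSpace ℝ (Fin n))
    (η q : EuclideanSpace ℝ (Fin n) → ℝ)
    (hf : ContDiffOn ℝ 1 f V) (hη : ContDiffOn ℝ 2 η V) (hq : ContDiffOn ℝ 1 q V)
    (hcompat : ∀ w ∈ V, fderiv ℝ q w = (fderiv ℝ η w).comp (fderiv ℝ f w))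
    (u_L u_R : EuclideanSpace ℝ (Fin n)) (huL : u_L ∈ V) (huR : u_R ∈ V) (a : ℝ)
    (uplus : EuclideanSpace ℝ (Fin n) → EuclideanSpace ℝ (Fin n))
    (σ : EuclideanSpace ℝ (Fin n) → ℝ)
    (hmaps : ∀ w ∈ Ω, uplus w ∈ V)
    (u : EuclideanSpace ℝ (Fin n)) (hu : u ∈ Ω)
    (hup : DifferentiableAt ℝ uplus u) (hσ : DifferentiableAt ℝ σ u)
    -- Rankine–Hugoniot relation on `Ω`:
    (hRH : ∀ w ∈ Ω, f (uplus w) - f w = σ w • (uplus w - w))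
    -- implicit equation `η(w|u⁺(w)) = −(a·η(w|u_L) − η(w|u_R))` on `Ω`:
    (heq : ∀ w ∈ Ω, relEnt η w (uplus w) = -(a * relEnt η w u_L - relEnt η w u_R)) :
    -- `D D_max(u) v = ⟨∇η(u⁺(u)) − ∇η(u_R) − a(∇η(u) − ∇η(u_L)), (Df(u) − σ(u)I)v⟩`
    ∀ v, fderiv ℝ (Dmax η q f uplus σ u_L u_R a) u v
      = fderiv ℝ η (uplus u) (fderiv ℝ f u v - σ u • v)
        - fderiv ℝ η u_R (fderiv ℝ f u v - σ u • v)
        - a * (fderiv ℝ η u (fderiv ℝ f u v - σ u • v)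
                - fderiv ℝ η u_L (fderiv ℝ f u v - σ u • v)) := by
  intro v
  have huV : u ∈ V := hΩV hu
  have hPV : uplus u ∈ V := hmaps u hu
  set P := uplus u with hPdef
  have hfP : DifferentiableAt ℝ f P :=
    (hf.contDiffAt (hV.mem_nhds hPV)).differentiableAt one_ne_zero
  have hfu : DifferentiableAt ℝ f u :=
    (hf.contDiffAt (hV.mem_nhds huV)).differentiableAt one_ne_zero
  have hqP : DifferentiableAt ℝ q P :=
    (hq.contDiffAt (hV.mem_nhds hPV)).differentiableAt one_ne_zero
  have hqu : DifferentiableAt ℝ q u :=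
    (hq.contDiffAt (hV.mem_nhds huV)).differentiableAt one_ne_zero
  have hηP : DifferentiableAt ℝ η P :=
    (hη.contDiffAt (hV.mem_nhds hPV)).differentiableAt two_ne_zero
  have hηu : DifferentiableAt ℝ η u :=
    (hη.contDiffAt (hV.mem_nhds huV)).differentiableAt two_ne_zero
  set U := fderiv ℝ uplus u
  set A := fderiv ℝ f u
  set A' := fderiv ℝ f P
  set S := fderiv ℝ σ u
  set HP := fderiv ℝ η P
  set Hu := fderiv ℝ η u
  set HR := fderiv ℝ η u_R
  set HL := fderiv ℝ η u_L
  -- derivative of the Rankine–Hugoniot expression is zero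
  have hGder : HasFDerivAt (fun w => f (uplus w) - f w - σ w • (uplus w - w))
      ((A'.comp U - A) - (σ u • (U - ContinuousLinearMap.id ℝ _) + S.smulRight (P - u))) u :=
    ((hfP.hasFDerivAt.comp u hup.hasFDerivAt).sub hfu.hasFDerivAt).sub
      (hσ.hasFDerivAt.smul (hup.hasFDerivAt.sub (hasFDerivAt_id u)))
  have hGzero : ((A'.comp U - A) - (σ u • (U - ContinuousLinearMap.id ℝ _)
      + S.smulRight (P - u))) = 0 := by
    have h0 : HasFDerivAt (fun _ : EuclideanSpace ℝ (Fin n) => (0 : EuclideanSpace ℝ (Fin n)))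
        ((A'.comp U - A) - (σ u • (U - ContinuousLinearMap.id ℝ _) + S.smulRight (P - u))) u := by
      apply hGder.congr_of_eventuallyEq
      filter_upwards [hΩ.mem_nhds hu] with w hw
      exact (sub_eq_zero.mpr (hRH w hw)).symm
    exact h0.unique (hasFDerivAt_const 0 u)
  have hstar : A' (U v) - A v - (σ u • (U v - v) + S v • (P - u)) = 0 := by
    have := congrArg (fun (T : EuclideanSpace ℝ (Fin n) →L[ℝ] EuclideanSpace ℝ (Fin n)) => T v)
      hGzero
    simpa using this
  have hHPstar : HP (A' (U v)) - HP (A v)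
      - (σ u * (HP (U v) - HP v) + S v * (HP P - HP u)) = 0 := by
    have := congrArg HP hstar
    simp only [map_sub, map_add, map_smul, map_zero, smul_eq_mul] at this
    linarith
  have hHRstar : HR (A' (U v)) - HR (A v)
      - (σ u * (HR (U v) - HR v) + S v * (HR P - HR u)) = 0 := by
    have := congrArg HR hstar
    simp only [map_sub, map_add, map_smul, map_zero, smul_eq_mul] at this
    linarith
  -- the implicit equation at u, algebraic form
  have halg : relEnt η P u_R - a * relEnt η u u_L
      = (HP P - HP u) - (HR P - HR u) := by
    have h0 := heq u hu
    simp only [relEnt, map_sub, ← hPdef] at h0 ⊢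
    linarith
  -- build derivative of Dmax
  have hT1 : HasFDerivAt (fun w => q (uplus w) - q u_R - (HR (f (uplus w)) - HR (f u_R)))
      (((fderiv ℝ q P).comp U) - (HR.comp (A'.comp U))) u :=
    ((hqP.hasFDerivAt.comp u hup.hasFDerivAt).sub_const (q u_R)).sub
      ((HR.hasFDerivAt.comp u (hfP.hasFDerivAt.comp u hup.hasFDerivAt)).sub_const (HR (f u_R)))
  have hT2 : HasFDerivAt (fun w => η (uplus w) - η u_R - (HR (uplus w) - HR u_R))
      ((HP.comp U) - (HR.comp U)) u :=
    ((hηP.hasFDerivAt.comp u hup.hasFDerivAt).sub_const (η u_R)).sub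
      ((HR.hasFDerivAt.comp u hup.hasFDerivAt).sub_const (HR u_R))
  have hT3 : HasFDerivAt
      (fun w => σ w * (η (uplus w) - η u_R - (HR (uplus w) - HR u_R)))
      (σ u • ((HP.comp U) - (HR.comp U))
        + (η P - η u_R - (HR P - HR u_R)) • S) u := hσ.hasFDerivAt.mul hT2
  have hT4 : HasFDerivAt (fun w => q w - q u_L - (HL (f w) - HL (f u_L)))
      ((fderiv ℝ q u) - (HL.comp A)) u :=
    (hqu.hasFDerivAt.sub_const (q u_L)).sub
      ((HL.hasFDerivAt.comp u hfu.hasFDerivAt).sub_const (HL (f u_L)))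
  have hT5 : HasFDerivAt (fun w => η w - η u_L - (HL w - HL u_L))
      (Hu - HL.comp (ContinuousLinearMap.id ℝ _)) u :=
    (hηu.hasFDerivAt.sub_const (η u_L)).sub
      ((HL.hasFDerivAt.comp u (hasFDerivAt_id u)).sub_const (HL u_L))
  have hT6 : HasFDerivAt (fun w => σ w * (η w - η u_L - (HL w - HL u_L)))
      (σ u • (Hu - HL.comp (ContinuousLinearMap.id ℝ _))
        + (η u - η u_L - (HL u - HL u_L)) • S) u := hσ.hasFDerivAt.mul hT5
  have hbig : HasFDerivAt (fun w =>
      (q (uplus w) - q u_R - (HR (f (uplus w)) - HR (f u_R))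
        - σ w * (η (uplus w) - η u_R - (HR (uplus w) - HR u_R)))
      - a * (q w - q u_L - (HL (f w) - HL (f u_L))
        - σ w * (η w - η u_L - (HL w - HL u_L))))
      ((((fderiv ℝ q P).comp U) - (HR.comp (A'.comp U))
        - (σ u • ((HP.comp U) - (HR.comp U)) + (η P - η u_R - (HR P - HR u_R)) • S))
       - a • (((fderiv ℝ q u) - (HL.comp A))
        - (σ u • (Hu - HL.comp (ContinuousLinearMap.id ℝ _))
          + (η u - η u_L - (HL u - HL u_L)) • S))) u :=
    (hT1.sub hT3).sub (((hT4.sub hT6)).const_mul a)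
  have hDmax : HasFDerivAt (Dmax η q f uplus σ u_L u_R a)
      ((((fderiv ℝ q P).comp U) - (HR.comp (A'.comp U))
        - (σ u • ((HP.comp U) - (HR.comp U)) + (η P - η u_R - (HR P - HR u_R)) • S))
       - a • (((fderiv ℝ q u) - (HL.comp A))
        - (σ u • (Hu - HL.comp (ContinuousLinearMap.id ℝ _))
          + (η u - η u_L - (HL u - HL u_L)) • S))) u := by
    apply hbig.congr_of_eventuallyEq
    filter_upwards with w
    simp only [Dmax, relFlux, relEnt, map_sub]
    rfl
  have hqPc : fderiv ℝ q P = HP.comp A' := hcompat P hPV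
  have hquc : fderiv ℝ q u = Hu.comp A := hcompat u huV
  rw [hDmax.fderiv]
  simp only [hqPc, hquc, ContinuousLinearMap.sub_apply, ContinuousLinearMap.add_apply,
    ContinuousLinearMap.coe_comp', Function.comp_apply, ContinuousLinearMap.smul_apply,
    ContinuousLinearMap.coe_id', id_eq, smul_eq_mul, map_sub, map_smul]
  have hER : relEnt η P u_R = η P - η u_R - (HR P - HR u_R) := by
    simp only [relEnt, map_sub]
    rfl
  have hEL : relEnt η u u_L = η u - η u_L - (HL u - HL u_L) := by
    simp only [relEnt, map_sub]
    rfl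
  rw [← hER, ← hEL] at *
  linear_combination hHPstar - hHRstar - S v * halg
end

section
/- Let 𝒱 ⊆ ℝⁿ be open, f : 𝒱 → ℝⁿ C², η : 𝒱 → ℝ C², q : 𝒱 → ℝ C¹ with Dq(w) = Dη(w) ∘ Df(w) for all w ∈ 𝒱. Fix u_L, u_R ∈ 𝒱 and a ∈ ℝ. Let Ω ⊆ 𝒱 be open and let u⁺ : Ω → 𝒱, σ : Ω → ℝ be C¹ and satisfy, for all w ∈ Ω: f(u⁺(w)) − f(w) = σ(w)·(u⁺(w) − w) and η(w|u⁺(w)) = −(a·η(w|u_L) − η(w|u_R)). Define D_max(w) := (q(u⁺(w);u_R) − σ(w)·η(u⁺(w)|u_R)) − a·(q(w;u_L) − σ(w)·η(w|u_L)). Then D_max is twice differentiable at every u ∈ Ω and for all v, w ∈ ℝⁿ: D²D_max(u)[v, w] = ⟨∇²η(u⁺(u))(Du⁺(u) v) − a·∇²η(u) v, (Df(u) − σ(u)·I) w⟩ + ⟨∇η(u⁺(u)) − ∇η(u_R) − a·(∇η(u) − ∇η(u_L)), D²f(u)[v, w] − (Dσ(u) v)·w⟩. -/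
open Topology

/-- The first derivative of `Dmax`, as a map. -/
noncomputable def gmap {n : ℕ} (η : EuclideanSpace ℝ (Fin n) → ℝ)
    (f uplus : EuclideanSpace ℝ (Fin n) → EuclideanSpace ℝ (Fin n))
    (σ : EuclideanSpace ℝ (Fin n) → ℝ)
    (u_L u_R : EuclideanSpace ℝ (Fin n)) (a : ℝ)
    (w : EuclideanSpace ℝ (Fin n)) : EuclideanSpace ℝ (Fin n) →L[ℝ] ℝ :=
  ((fderiv ℝ η (uplus w) - fderiv ℝ η u_R) - a • (fderiv ℝ η w - fderiv ℝ η u_L)).comp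
    (fderiv ℝ f w - σ w • ContinuousLinearMap.id ℝ (EuclideanSpace ℝ (Fin n)))

lemma hasFDerivAt_Dmax {n : ℕ} (V Ω : Set (EuclideanSpace ℝ (Fin n)))
    (hV : IsOpen V) (hΩ : IsOpen Ω) (hΩV : Ω ⊆ V)
    (f : EuclideanSpace ℝ (Fin n) → EuclideanSpace ℝ (Fin n))
    (η q : EuclideanSpace ℝ (Fin n) → ℝ)
    (hf : ContDiffOn ℝ 2 f V) (hη : ContDiffOn ℝ 2 η V) (hq : ContDiffOn ℝ 1 q V)
    (hcompat : ∀ w ∈ V, fderiv ℝ q w = (fderiv ℝ η w).comp (fderiv ℝ f w))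
    (u_L u_R : EuclideanSpace ℝ (Fin n)) (a : ℝ)
    (uplus : EuclideanSpace ℝ (Fin n) → EuclideanSpace ℝ (Fin n))
    (σ : EuclideanSpace ℝ (Fin n) → ℝ)
    (hmaps : ∀ w ∈ Ω, uplus w ∈ V)
    (hup : ContDiffOn ℝ 1 uplus Ω) (hσ : ContDiffOn ℝ 1 σ Ω)
    (hRH : ∀ w ∈ Ω, f (uplus w) - f w = σ w • (uplus w - w))
    (heq : ∀ w ∈ Ω, relEnt η w (uplus w) = -(a * relEnt η w u_L - relEnt η w u_R))
    (w : EuclideanSpace ℝ (Fin n)) (hw : w ∈ Ω) :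
    HasFDerivAt (Dmax η q f uplus σ u_L u_R a) (gmap η f uplus σ u_L u_R a w) w := by
  have hwV : w ∈ V := hΩV hw
  have hpV : uplus w ∈ V := hmaps w hw
  have hdf : ∀ x ∈ V, HasFDerivAt f (fderiv ℝ f x) x := fun x hx =>
    ((hf.differentiableOn two_ne_zero).differentiableAt (hV.mem_nhds hx)).hasFDerivAt
  have hdη : ∀ x ∈ V, HasFDerivAt η (fderiv ℝ η x) x := fun x hx =>
    ((hη.differentiableOn two_ne_zero).differentiableAt (hV.mem_nhds hx)).hasFDerivAt
  have hdq : ∀ x ∈ V, HasFDerivAt q (fderiv ℝ q x) x := fun x hx =>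
    ((hq.differentiableOn one_ne_zero).differentiableAt (hV.mem_nhds hx)).hasFDerivAt
  have hU : HasFDerivAt uplus (fderiv ℝ uplus w) w :=
    ((hup.differentiableOn one_ne_zero).differentiableAt (hΩ.mem_nhds hw)).hasFDerivAt
  have hS : HasFDerivAt σ (fderiv ℝ σ w) w :=
    ((hσ.differentiableOn one_ne_zero).differentiableAt (hΩ.mem_nhds hw)).hasFDerivAt
  set p := uplus w with hp
  set U := fderiv ℝ uplus w with hU'
  set S := fderiv ℝ σ w with hS'
  set Fp := fderiv ℝ f p with hFp
  set Fw := fderiv ℝ f w with hFw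
  set Ep := fderiv ℝ η p with hEp
  set Ew := fderiv ℝ η w with hEw
  set ER := fderiv ℝ η u_R with hER
  set EL := fderiv ℝ η u_L with hEL
  -- derivative of the Rankine–Hugoniot relation
  have hRzero : HasFDerivAt (fun x => f (uplus x) - f x - σ x • (uplus x - x))
      (0 : EuclideanSpace ℝ (Fin n) →L[ℝ] EuclideanSpace ℝ (Fin n)) w := by
    have hev : (fun x => f (uplus x) - f x - σ x • (uplus x - x)) =ᶠ[𝓝 w]
        (fun _ => (0 : EuclideanSpace ℝ (Fin n))) := by
      filter_upwards [hΩ.mem_nhds hw] with x hx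
      rw [hRH x hx, sub_self]
    exact (hasFDerivAt_const (0 : EuclideanSpace ℝ (Fin n)) w).congr_of_eventuallyEq hev
  have h2 : HasFDerivAt (fun x => f (uplus x)) (Fp.comp U) w := (hdf p hpV).comp w hU
  have hRD : HasFDerivAt (fun x => f (uplus x) - f x - σ x • (uplus x - x))
      (Fp.comp U - Fw - (σ w • (U - ContinuousLinearMap.id ℝ _) + S.smulRight (p - w))) w :=
    (h2.sub (hdf w hwV)).sub (hS.smul (hU.sub (hasFDerivAt_id w)))
  have hDR0 : Fp.comp U - Fw - (σ w • (U - ContinuousLinearMap.id ℝ _) + S.smulRight (p - w))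
      = 0 := hRD.unique hRzero
  have hkey : ∀ v, Fp (U v) = Fw v + S v • (p - w) + σ w • (U v - v) := by
    intro v
    have h := ContinuousLinearMap.ext_iff.mp hDR0 v
    simp only [ContinuousLinearMap.sub_apply, ContinuousLinearMap.add_apply,
      ContinuousLinearMap.coe_comp', Function.comp_apply, ContinuousLinearMap.smul_apply,
      ContinuousLinearMap.coe_id', id_eq, ContinuousLinearMap.smulRight_apply,
      ContinuousLinearMap.zero_apply, sub_eq_zero] at h
    rw [sub_eq_iff_eq_add] at h
    rw [h]; abel
  -- now build the raw derivative of Dmax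
  have h1 : HasFDerivAt (fun x => q (uplus x)) ((Ep.comp Fp).comp U) w := by
    have := (hdq p hpV).comp w hU
    rwa [hcompat p hpV] at this
  have h3 : HasFDerivAt (fun x => (ER : _ →L[ℝ] ℝ) (f (uplus x) - f u_R))
      (ER.comp (Fp.comp U)) w := ER.hasFDerivAt.comp w (h2.sub_const _)
  have h4 : HasFDerivAt (fun x => η (uplus x)) (Ep.comp U) w := (hdη p hpV).comp w hU
  have h5 : HasFDerivAt (fun x => (ER : _ →L[ℝ] ℝ) (uplus x - u_R)) (ER.comp U) w :=
    ER.hasFDerivAt.comp w (hU.sub_const _)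
  have hflux : HasFDerivAt (fun x => relFlux η q f (uplus x) u_R)
      ((Ep.comp Fp).comp U - ER.comp (Fp.comp U)) w := by
    simpa [relFlux, Pi.sub_def] using (h1.sub_const (q u_R)).sub h3
  have hrelE : HasFDerivAt (fun x => relEnt η (uplus x) u_R) (Ep.comp U - ER.comp U) w := by
    simpa [relEnt, Pi.sub_def] using (h4.sub_const (η u_R)).sub h5
  have hA : HasFDerivAt (fun x => relFlux η q f (uplus x) u_R - σ x * relEnt η (uplus x) u_R)
      (((Ep.comp Fp).comp U - ER.comp (Fp.comp U)) -
        (σ w • (Ep.comp U - ER.comp U) + relEnt η p u_R • S)) w :=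
    hflux.sub (hS.mul hrelE)
  have hfluxB : HasFDerivAt (fun x => relFlux η q f x u_L)
      (Ew.comp Fw - EL.comp Fw) w := by
    have hq1 : HasFDerivAt q (Ew.comp Fw) w := by
      have := hdq w hwV; rwa [hcompat w hwV] at this
    simpa [relFlux, Pi.sub_def, Function.comp_def] using (hq1.sub_const (q u_L)).sub
      (EL.hasFDerivAt.comp w ((hdf w hwV).sub_const _))
  have hrelEB : HasFDerivAt (fun x => relEnt η x u_L) (Ew - EL) w := by
    have h6 : HasFDerivAt (fun x => (EL : _ →L[ℝ] ℝ) (x - u_L))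
        (EL.comp (ContinuousLinearMap.id ℝ _)) w :=
      EL.hasFDerivAt.comp w ((hasFDerivAt_id w).sub_const _)
    rw [ContinuousLinearMap.comp_id] at h6
    simpa [relEnt, Pi.sub_def] using ((hdη w hwV).sub_const (η u_L)).sub h6
  have hB : HasFDerivAt (fun x => relFlux η q f x u_L - σ x * relEnt η x u_L)
      ((Ew.comp Fw - EL.comp Fw) - (σ w • (Ew - EL) + relEnt η w u_L • S)) w :=
    hfluxB.sub (hS.mul hrelEB)
  have hD0 : HasFDerivAt (Dmax η q f uplus σ u_L u_R a)
      ((((Ep.comp Fp).comp U - ER.comp (Fp.comp U)) -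
        (σ w • (Ep.comp U - ER.comp U) + relEnt η p u_R • S)) -
       a • ((Ew.comp Fw - EL.comp Fw) - (σ w • (Ew - EL) + relEnt η w u_L • S))) w := by
    exact hA.sub (hB.const_mul a)
  suffices hgw : gmap η f uplus σ u_L u_R a w
      = (((Ep.comp Fp).comp U - ER.comp (Fp.comp U)) -
        (σ w • (Ep.comp U - ER.comp U) + relEnt η p u_R • S)) -
       a • ((Ew.comp Fw - EL.comp Fw) - (σ w • (Ew - EL) + relEnt η w u_L • S)) by
    rw [hgw]; exact hD0
  have hE := heq w hw
  simp only [relEnt, map_sub] at hE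
  ext v
  simp only [gmap, ← hp, ← hU', ← hS', ← hFp, ← hFw, ← hEp, ← hEw, ← hER, ← hEL,
    ContinuousLinearMap.coe_comp', Function.comp_apply, ContinuousLinearMap.sub_apply,
    ContinuousLinearMap.add_apply, ContinuousLinearMap.smul_apply,
    ContinuousLinearMap.coe_id', id_eq, ContinuousLinearMap.smulRight_apply, smul_eq_mul,
    relEnt, map_sub, map_smul, map_add]
  rw [hkey v]
  simp only [map_add, map_sub, map_smul, smul_eq_mul]
  linear_combination -(S v) * hE

set_option maxHeartbeats 1600000 in
theorem stmt12 {n : ℕ} (V Ω : Set (EuclideanSpace ℝ (Fin n)))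
    (hV : IsOpen V) (hΩ : IsOpen Ω) (hΩV : Ω ⊆ V)
    (f : EuclideanSpace ℝ (Fin n) → EuclideanSpace ℝ (Fin n))
    (η q : EuclideanSpace ℝ (Fin n) → ℝ)
    (hf : ContDiffOn ℝ 2 f V) (hη : ContDiffOn ℝ 2 η V) (hq : ContDiffOn ℝ 1 q V)
    (hcompat : ∀ w ∈ V, fderiv ℝ q w = (fderiv ℝ η w).comp (fderiv ℝ f w))
    (u_L u_R : EuclideanSpace ℝ (Fin n)) (huL : u_L ∈ V) (huR : u_R ∈ V) (a : ℝ)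
    (uplus : EuclideanSpace ℝ (Fin n) → EuclideanSpace ℝ (Fin n))
    (σ : EuclideanSpace ℝ (Fin n) → ℝ)
    (hmaps : ∀ w ∈ Ω, uplus w ∈ V)
    (hup : ContDiffOn ℝ 1 uplus Ω) (hσ : ContDiffOn ℝ 1 σ Ω)
    -- Rankine–Hugoniot relation on `Ω`:
    (hRH : ∀ w ∈ Ω, f (uplus w) - f w = σ w • (uplus w - w))
    -- implicit equation `η(w|u⁺(w)) = −(a·η(w|u_L) − η(w|u_R))` on `Ω`:
    (heq : ∀ w ∈ Ω, relEnt η w (uplus w) = -(a * relEnt η w u_L - relEnt η w u_R)) :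
    ∀ u ∈ Ω,
      -- `D_max` is twice differentiable at `u`:
      (∀ᶠ w in 𝓝 u, DifferentiableAt ℝ (Dmax η q f uplus σ u_L u_R a) w) ∧
      DifferentiableAt ℝ (fderiv ℝ (Dmax η q f uplus σ u_L u_R a)) u ∧
      -- `D²D_max(u)[v, w] = ⟨∇²η(u⁺(u))(Du⁺(u)v) − a∇²η(u)v, (Df(u) − σ(u)I)w⟩
      --   + ⟨∇η(u⁺(u)) − ∇η(u_R) − a(∇η(u) − ∇η(u_L)), D²f(u)[v,w] − (Dσ(u)v)w⟩`
      ∀ v w, fderiv ℝ (fderiv ℝ (Dmax η q f uplus σ u_L u_R a)) u v w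
        = (fderiv ℝ (fderiv ℝ η) (uplus u) (fderiv ℝ uplus u v)
              (fderiv ℝ f u w - σ u • w)
            - a * fderiv ℝ (fderiv ℝ η) u v (fderiv ℝ f u w - σ u • w))
          + (fderiv ℝ η (uplus u)
                (fderiv ℝ (fderiv ℝ f) u v w - fderiv ℝ σ u v • w)
              - fderiv ℝ η u_R
                (fderiv ℝ (fderiv ℝ f) u v w - fderiv ℝ σ u v • w)
              - a * (fderiv ℝ η u
                      (fderiv ℝ (fderiv ℝ f) u v w - fderiv ℝ σ u v • w)
                    - fderiv ℝ η u_L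
                      (fderiv ℝ (fderiv ℝ f) u v w - fderiv ℝ σ u v • w))) := by
  intro u hu
  have huV : u ∈ V := hΩV hu
  have hpV : uplus u ∈ V := hmaps u hu
  have hDmax : ∀ w ∈ Ω, HasFDerivAt (Dmax η q f uplus σ u_L u_R a)
      (gmap η f uplus σ u_L u_R a w) w :=
    hasFDerivAt_Dmax V Ω hV hΩ hΩV f η q hf hη hq hcompat u_L u_R a uplus σ hmaps hup hσ hRH heq
  have hev : fderiv ℝ (Dmax η q f uplus σ u_L u_R a) =ᶠ[𝓝 u] gmap η f uplus σ u_L u_R a := by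
    filter_upwards [hΩ.mem_nhds hu] with x hx using (hDmax x hx).fderiv
  have hη2 : ∀ x ∈ V, HasFDerivAt (fderiv ℝ η) (fderiv ℝ (fderiv ℝ η) x) x := fun x hx =>
    (((hη.fderiv_of_isOpen hV (m := 1) (by norm_num)).differentiableOn one_ne_zero).differentiableAt
      (hV.mem_nhds hx)).hasFDerivAt
  have hf2 : ∀ x ∈ V, HasFDerivAt (fderiv ℝ f) (fderiv ℝ (fderiv ℝ f) x) x := fun x hx =>
    (((hf.fderiv_of_isOpen hV (m := 1) (by norm_num)).differentiableOn one_ne_zero).differentiableAt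
      (hV.mem_nhds hx)).hasFDerivAt
  have hU : HasFDerivAt uplus (fderiv ℝ uplus u) u :=
    ((hup.differentiableOn one_ne_zero).differentiableAt (hΩ.mem_nhds hu)).hasFDerivAt
  have hS : HasFDerivAt σ (fderiv ℝ σ u) u :=
    ((hσ.differentiableOn one_ne_zero).differentiableAt (hΩ.mem_nhds hu)).hasFDerivAt
  have hc : HasFDerivAt
      (fun w => (fderiv ℝ η (uplus w) - fderiv ℝ η u_R) - a • (fderiv ℝ η w - fderiv ℝ η u_L))
      (((fderiv ℝ (fderiv ℝ η) (uplus u)).comp (fderiv ℝ uplus u))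
        - a • fderiv ℝ (fderiv ℝ η) u) u := by
    have hc1 := (((hη2 (uplus u) hpV).comp u hU).sub_const (fderiv ℝ η u_R))
    have hc2 := ((hη2 u huV).sub_const (fderiv ℝ η u_L)).const_smul a
    exact hc1.sub hc2
  have hM : HasFDerivAt
      (fun w => fderiv ℝ f w - σ w • ContinuousLinearMap.id ℝ (EuclideanSpace ℝ (Fin n)))
      (fderiv ℝ (fderiv ℝ f) u
        - (fderiv ℝ σ u).smulRight (ContinuousLinearMap.id ℝ (EuclideanSpace ℝ (Fin n)))) u :=
    (hf2 u huV).sub (hS.smul_const (ContinuousLinearMap.id ℝ (EuclideanSpace ℝ (Fin n))))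
  have hg : HasFDerivAt (gmap η f uplus σ u_L u_R a)
      ((ContinuousLinearMap.compL ℝ (EuclideanSpace ℝ (Fin n)) (EuclideanSpace ℝ (Fin n)) ℝ
          ((fderiv ℝ η (uplus u) - fderiv ℝ η u_R) - a • (fderiv ℝ η u - fderiv ℝ η u_L))).comp
          (fderiv ℝ (fderiv ℝ f) u
            - (fderiv ℝ σ u).smulRight (ContinuousLinearMap.id ℝ (EuclideanSpace ℝ (Fin n))))
        + ((ContinuousLinearMap.compL ℝ (EuclideanSpace ℝ (Fin n)) (EuclideanSpace ℝ (Fin n))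
              ℝ).flip
            (fderiv ℝ f u - σ u • ContinuousLinearMap.id ℝ (EuclideanSpace ℝ (Fin n)))).comp
          (((fderiv ℝ (fderiv ℝ η) (uplus u)).comp (fderiv ℝ uplus u))
            - a • fderiv ℝ (fderiv ℝ η) u)) u := by
    exact hc.clm_comp hM
  refine ⟨?_, ?_, ?_⟩
  · filter_upwards [hΩ.mem_nhds hu] with x hx using (hDmax x hx).differentiableAt
  · exact hev.differentiableAt_iff.mpr hg.differentiableAt
  · intro v w
    rw [hev.fderiv_eq, hg.fderiv]
    simp only [ContinuousLinearMap.add_apply, ContinuousLinearMap.coe_comp',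
      Function.comp_apply, ContinuousLinearMap.flip_apply, ContinuousLinearMap.compL_apply,
      ContinuousLinearMap.sub_apply, ContinuousLinearMap.smul_apply,
      ContinuousLinearMap.smulRight_apply, ContinuousLinearMap.coe_id', id_eq,
      smul_eq_mul, map_sub, map_smul]
    ring
end
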